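/- Under the setting of steepest descent on exponential loss over linearly separable data (i.e., there exists v with ⟨v, x_n⟩ > 0 for all n), if ‖∇L(w_t)‖_* → 0 along the iterates, then L(w_t) → 0 and ‖w_t‖ → ∞. -/

import Mathlib

open Filter Topology Finset
open scoped RealInnerProductSpace BigOperators

noncomputable section

abbrev Euc (d : ℕ) := EuclideanSpace ℝ (Fin d)

/-- `N` is a norm on `ℝ^d`. -/
def IsNorm {d : ℕ} (N : Euc d → ℝ) : Prop :=
  (∀ v, N v = 0 ↔ v = 0) ∧ (∀ (c : ℝ) (v), N (c • v) = |c| * N v) ∧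
  (∀ v w, N (v + w) ≤ N v + N w)

lemma isNorm_nonneg {d : ℕ} {Nrm : Euc d → ℝ} (h : IsNorm Nrm) (u : Euc d) : 0 ≤ Nrm u := by
  obtain ⟨h0, hs, ht⟩ := h
  have h1 : Nrm 0 = 0 := (h0 0).mpr rfl
  have h2 : Nrm (-u) = Nrm u := by
    have := hs (-1) u; simpa using this
  have h3 := ht u (-u)
  simp only [add_neg_cancel, h1, h2] at h3
  linarith

lemma isNorm_le_const {d : ℕ} {Nrm : Euc d → ℝ} (h : IsNorm Nrm) :
    ∃ C : ℝ, 0 ≤ C ∧ ∀ u, Nrm u ≤ C * ‖u‖ := by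
  obtain ⟨h0, hs, ht⟩ := h
  refine ⟨∑ i, Nrm (EuclideanSpace.single i 1), Finset.sum_nonneg fun i _ => isNorm_nonneg ⟨h0, hs, ht⟩ _, fun u => ?_⟩
  have hu : u = ∑ i, u i • EuclideanSpace.single i (1:ℝ) := by
    ext j
    rw [WithLp.ofLp_sum, Fintype.sum_apply]
    simp [EuclideanSpace.single_apply, mul_comm]
  calc Nrm u = Nrm (∑ i, u i • EuclideanSpace.single i (1:ℝ)) := by rw [← hu]
    _ ≤ ∑ i, Nrm (u i • EuclideanSpace.single i (1:ℝ)) :=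
        Finset.le_sum_of_subadditive Nrm ((h0 0).mpr rfl).le ht _ _
    _ = ∑ i, |u i| * Nrm (EuclideanSpace.single i (1:ℝ)) := by simp [hs]
    _ ≤ ∑ i, ‖u‖ * Nrm (EuclideanSpace.single i (1:ℝ)) := by
        refine Finset.sum_le_sum fun i _ => ?_
        have h1 : |u i| ≤ ‖u‖ := by
          have h2 := abs_real_inner_le_norm u (EuclideanSpace.single i (1:ℝ))
          simpa [EuclideanSpace.inner_single_right, EuclideanSpace.norm_single] using h2
        exact mul_le_mul_of_nonneg_right h1 (isNorm_nonneg ⟨h0, hs, ht⟩ _)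
    _ = (∑ i, Nrm (EuclideanSpace.single i 1)) * ‖u‖ := by rw [Finset.sum_mul]; simp [mul_comm]

lemma isNorm_continuous {d : ℕ} {Nrm : Euc d → ℝ} (h : IsNorm Nrm) : Continuous Nrm := by
  obtain ⟨C, hC0, hC⟩ := isNorm_le_const h
  obtain ⟨h0, hs, ht⟩ := h
  have key : ∀ a b : Euc d, Nrm a - Nrm b ≤ C * ‖a - b‖ := fun a b => by
    have := ht (a - b) b
    simp only [sub_add_cancel] at this
    linarith [hC (a - b)]
  refine Metric.continuous_iff.mpr fun a ε hε => ?_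
  refine ⟨ε / (C + 1), by positivity, fun b hb => ?_⟩
  rw [Real.dist_eq]
  have hba : ‖b - a‖ < ε / (C + 1) := by rwa [dist_eq_norm] at hb
  have hab : ‖a - b‖ = ‖b - a‖ := by rw [← norm_neg, neg_sub]
  have h1 := key a b
  have h2 := key b a
  have hpos : (0:ℝ) < C + 1 := by linarith
  have hkey : C * ‖b - a‖ < ε := by
    calc C * ‖b - a‖ < (C + 1) * (ε / (C + 1)) :=
          mul_lt_mul' (by linarith) hba (norm_nonneg _) hpos
      _ = ε := by field_simp
  rw [hab] at h1
  rw [abs_sub_lt_iff]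
  exact ⟨by linarith, by linarith⟩

lemma isNorm_lower {d : ℕ} {Nrm : Euc d → ℝ} (h : IsNorm Nrm) (v0 : Euc d) (hv0 : v0 ≠ 0) :
    ∃ m : ℝ, 0 < m ∧ ∀ u, m * ‖u‖ ≤ Nrm u := by
  have hne : (Metric.sphere (0 : Euc d) 1).Nonempty := by
    refine ⟨‖v0‖⁻¹ • v0, ?_⟩
    simp [norm_smul, abs_of_nonneg, inv_mul_cancel₀ (norm_ne_zero_iff.mpr hv0)]
  obtain ⟨u0, hu0mem, hu0min⟩ := (isCompact_sphere (0 : Euc d) 1).exists_isMinOn hne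
    (isNorm_continuous h).continuousOn
  have hu0 : ‖u0‖ = 1 := by simpa using hu0mem
  have hu0ne : u0 ≠ 0 := fun hh => by simp [hh] at hu0
  refine ⟨Nrm u0, lt_of_le_of_ne (isNorm_nonneg h u0) fun hh => hu0ne ((h.1 u0).mp hh.symm), fun u => ?_⟩
  rcases eq_or_ne u 0 with rfl | hu
  · simp [(h.1 0).mpr rfl]
  · have hmem : ‖u‖⁻¹ • u ∈ Metric.sphere (0 : Euc d) 1 := by
      simp [norm_smul, abs_of_nonneg, inv_mul_cancel₀ (norm_ne_zero_iff.mpr hu)]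
    have hle : Nrm u0 ≤ Nrm (‖u‖⁻¹ • u) := isMinOn_iff.mp hu0min _ hmem
    have hsm : Nrm (‖u‖⁻¹ • u) = ‖u‖⁻¹ * Nrm u := by
      rw [h.2.1]; congr 1; rw [abs_of_nonneg]; positivity
    rw [hsm] at hle
    have hn : 0 < ‖u‖ := norm_pos_iff.mpr hu
    calc Nrm u0 * ‖u‖ ≤ (‖u‖⁻¹ * Nrm u) * ‖u‖ := by
          exact mul_le_mul_of_nonneg_right hle hn.le
      _ = Nrm u := by field_simp

/-- Dual norm `‖y‖_* = sup_{‖v‖ ≤ 1} ⟨y, v⟩`. -/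
def dualNorm {d : ℕ} (N : Euc d → ℝ) (y : Euc d) : ℝ :=
  sSup {s | ∃ v, N v ≤ 1 ∧ s = ⟪y, v⟫}

/-- Exponential-loss empirical objective `L(w) = ∑ n exp(-⟨w, x_n⟩)`. -/
def expLoss {d N : ℕ} (x : Fin N → Euc d) (u : Euc d) : ℝ :=
  ∑ n, Real.exp (-⟪u, x n⟫)

/-- Negative gradient of the exponential loss: `-∇L(w) = ∑ n exp(-⟨w,x_n⟩) x_n`. -/
def negGrad {d N : ℕ} (x : Fin N → Euc d) (u : Euc d) : Euc d :=
  ∑ n, Real.exp (-⟪u, x n⟫) • x n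
/-- on linearly separable data, if `‖∇L(w_t)‖_* → 0` then `L(w_t) → 0`
and `‖w_t‖ → ∞`. -/
theorem loss_to_zero_norm_to_infty {d N : ℕ} [NeZero N] (Nrm : Euc d → ℝ)
    (hNrm : IsNorm Nrm) (x : Fin N → Euc d)
    (v : Euc d) (hsep : ∀ n, 0 < ⟪v, x n⟫) (w : ℕ → Euc d)
    (hgrad : Tendsto (fun t => dualNorm Nrm (-(negGrad x (w t)))) atTop (𝓝 0)) :
    Tendsto (fun t => expLoss x (w t)) atTop (𝓝 0) ∧
      Tendsto (fun t => Nrm (w t)) atTop atTop := by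
  have n0 : Fin N := ⟨0, Nat.pos_of_ne_zero (NeZero.ne N)⟩
  have hvne : v ≠ 0 := by
    intro h; have := hsep n0; rw [h] at this; simp at this
  obtain ⟨m, hm, hml⟩ := isNorm_lower hNrm v hvne
  have hNv : 0 < Nrm v := by
    rcases lt_or_eq_of_le (isNorm_nonneg hNrm v) with h | h
    · exact h
    · exact absurd ((hNrm.1 v).mp h.symm) hvne
  set c : ℝ := Finset.univ.inf' ⟨n0, Finset.mem_univ n0⟩ (fun n => ⟪v, x n⟫) with hc_def
  have hc : 0 < c := by
    rw [hc_def]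
    exact (Finset.lt_inf'_iff _).2 fun n _ => hsep n
  have hc_le : ∀ n, c ≤ ⟪v, x n⟫ := fun n =>
    Finset.inf'_le _ (Finset.mem_univ n)
  have hLnonneg : ∀ u, 0 ≤ expLoss x u := fun u =>
    Finset.sum_nonneg fun n _ => (Real.exp_pos _).le
  have hkey : ∀ u, c * expLoss x u ≤ ⟪negGrad x u, v⟫ := by
    intro u
    have hng : ⟪negGrad x u, v⟫ = ∑ n, Real.exp (-⟪u, x n⟫) * ⟪x n, v⟫ := by
      rw [negGrad, sum_inner]
      exact Finset.sum_congr rfl fun n _ => real_inner_smul_left _ _ _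
    rw [hng, expLoss, Finset.mul_sum]
    refine Finset.sum_le_sum fun n _ => ?_
    have h1 : c ≤ ⟪x n, v⟫ := by rw [real_inner_comm]; exact hc_le n
    have h2 := (Real.exp_pos (-⟪u, x n⟫)).le
    nlinarith
  have hbdd : ∀ y : Euc d, BddAbove {s | ∃ u, Nrm u ≤ 1 ∧ s = ⟪y, u⟫} := by
    intro y
    refine ⟨‖y‖ * m⁻¹, fun s hs => ?_⟩
    obtain ⟨u, hu, rfl⟩ := hs
    have h1 : ⟪y, u⟫ ≤ ‖y‖ * ‖u‖ := real_inner_le_norm _ _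
    have h2 : ‖u‖ ≤ m⁻¹ := by
      have h3 := hml u
      have h4 : m * ‖u‖ ≤ 1 := le_trans h3 hu
      rw [← mul_le_mul_iff_right₀ hm, mul_inv_cancel₀ hm.ne']
      exact h4
    nlinarith [norm_nonneg y, norm_nonneg u]
  have hdn : ∀ (y u : Euc d), Nrm u ≤ 1 → ⟪y, u⟫ ≤ dualNorm Nrm y := fun y u hu =>
    le_csSup (hbdd y) ⟨u, hu, rfl⟩
  have hsq : ∀ t, (c / Nrm v) * expLoss x (w t) ≤ dualNorm Nrm (-(negGrad x (w t))) := by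
    intro t
    have hu1 : Nrm (-((Nrm v)⁻¹ • v)) ≤ 1 := by
      have he : (-((Nrm v)⁻¹ • v)) = (-(Nrm v)⁻¹) • v := by rw [neg_smul]
      rw [he, hNrm.2.1, abs_neg, abs_of_nonneg (by positivity),
        inv_mul_cancel₀ hNv.ne']
    have h1 := hdn (-(negGrad x (w t))) _ hu1
    have h2 : ⟪-(negGrad x (w t)), -((Nrm v)⁻¹ • v)⟫ = (Nrm v)⁻¹ * ⟪negGrad x (w t), v⟫ := by
      rw [inner_neg_neg, real_inner_smul_right]
    rw [h2] at h1
    have h3 := hkey (w t)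
    calc (c / Nrm v) * expLoss x (w t) = (Nrm v)⁻¹ * (c * expLoss x (w t)) := by
          field_simp
      _ ≤ (Nrm v)⁻¹ * ⟪negGrad x (w t), v⟫ :=
          mul_le_mul_of_nonneg_left h3 (by positivity)
      _ ≤ dualNorm Nrm (-(negGrad x (w t))) := h1
  have hLtend : Tendsto (fun t => expLoss x (w t)) atTop (𝓝 0) := by
    have h1 : Tendsto (fun t => (Nrm v / c) * dualNorm Nrm (-(negGrad x (w t)))) atTop (𝓝 0) := by
      have h2 := hgrad.const_mul (Nrm v / c)
      simpa using h2
    refine squeeze_zero (fun t => hLnonneg _) (fun t => ?_) h1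
    have hcv : 0 < c / Nrm v := by positivity
    have h5 := hsq t
    rw [div_mul_eq_mul_div, le_div_iff₀ hc, ← sub_nonneg]
    rw [div_mul_eq_mul_div, div_le_iff₀ hNv, ← sub_nonneg] at h5
    nlinarith
  refine ⟨hLtend, ?_⟩
  have hterm : Tendsto (fun t => Real.exp (-⟪w t, x n0⟫)) atTop (𝓝 0) := by
    refine squeeze_zero (fun t => (Real.exp_pos _).le) (fun t => ?_) hLtend
    exact Finset.single_le_sum (fun n _ => (Real.exp_pos (-⟪w t, x n⟫)).le) (Finset.mem_univ n0)
  have hip : Tendsto (fun t => ⟪w t, x n0⟫) atTop atTop := by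
    have h1 : Tendsto (fun t => Real.exp (-⟪w t, x n0⟫)) atTop (𝓝[>] 0) := by
      rw [tendsto_nhdsWithin_iff]
      exact ⟨hterm, Eventually.of_forall fun t => Real.exp_pos _⟩
    have h2 : Tendsto (fun t => Real.log (Real.exp (-⟪w t, x n0⟫))) atTop atBot :=
      Real.tendsto_log_nhdsGT_zero.comp h1
    simp only [Real.log_exp] at h2
    have h3 : Tendsto (fun t => -(-⟪w t, x n0⟫)) atTop atTop :=
      tendsto_neg_atBot_atTop.comp h2
    simpa using h3
  have hx0 : 0 < ‖x n0‖ := by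
    rcases eq_or_ne (x n0) 0 with h | h
    · have := hsep n0; rw [h] at this; simp at this
    · exact norm_pos_iff.mpr h
  have hgrow : Tendsto (fun t => (m / ‖x n0‖) * ⟪w t, x n0⟫) atTop atTop :=
    hip.const_mul_atTop (by positivity)
  refine tendsto_atTop_mono (fun t => ?_) hgrow
  have h1 : ⟪w t, x n0⟫ ≤ ‖w t‖ * ‖x n0‖ := real_inner_le_norm _ _
  calc (m / ‖x n0‖) * ⟪w t, x n0⟫ ≤ (m / ‖x n0‖) * (‖w t‖ * ‖x n0‖) :=
        mul_le_mul_of_nonneg_left h1 (by positivity)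
    _ = m * ‖w t‖ := by field_simp
    _ ≤ Nrm (w t) := hml _

end
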